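/- Let G be a Lie group and π : G → B(Y)ˣ a strongly continuous uniformly bounded representation on a Banach space Y, with contragredient π* on Y*. If the orbit map g ↦ π*(g)ξ is of class C^k (k ≥ 1) in the norm topology of Y*, then ξ belongs to the domain of dπ(X_{j₁})* ⋯ dπ(X_{j_k})* for every choice of indices j₁,…,j_k ∈ {1,…,m}, where {X₁,…,X_m} is any basis of the Lie algebra 𝔤 of G and dπ(X) denotes the generator of the one-parameter group t ↦ π(exp_G(tX)). -/

import Mathlib

open NormedSpace

noncomputable section

/-- The Banach-space adjoint (transpose) of a bounded operator, acting on the dual. -/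
def contraDual {Y : Type*} [NormedAddCommGroup Y] [NormedSpace ℂ Y]
    (T : Y →L[ℂ] Y) : StrongDual ℂ Y →L[ℂ] StrongDual ℂ Y :=
  (ContinuousLinearMap.compL ℂ Y Y ℂ).flip T

/-- The domain of the Banach-space adjoint `A*` of an unbounded operator `A` on `Y`:
those `ξ ∈ Y*` for which there is `η ∈ Y*` with `η (x) = ξ (A x)` for all `x ∈ D(A)`. -/
def adjDomain {Y : Type*} [NormedAddCommGroup Y] [NormedSpace ℂ Y]
    (A : Y →ₗ.[ℂ] Y) : Set (StrongDual ℂ Y) :=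
  {ξ | ∃ η : StrongDual ℂ Y, ∀ x : A.domain, η (x : Y) = ξ (A x)}

/-- The value `A* ξ` of the Banach-space adjoint (unique when `A` is densely defined),
with junk value `0` outside the domain of `A*`. -/
def adjApply {Y : Type*} [NormedAddCommGroup Y] [NormedSpace ℂ Y]
    (A : Y →ₗ.[ℂ] Y) (ξ : StrongDual ℂ Y) : StrongDual ℂ Y :=
  @dite _ (ξ ∈ adjDomain A) (Classical.dec _) (fun h => h.choose) fun _ => 0

/-- `iterAdjMem A [j₁, …, j_k] ξ` says that `ξ` belongs to the domain of the composition
`A j_k* ⋯ A j₁*` of the adjoints (the adjoint indexed by the head being applied first). -/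
def iterAdjMem {Y : Type*} [NormedAddCommGroup Y] [NormedSpace ℂ Y] {m : ℕ}
    (A : Fin m → (Y →ₗ.[ℂ] Y)) : List (Fin m) → StrongDual ℂ Y → Prop
  | [], _ => True
  | j :: l, ξ => ξ ∈ adjDomain (A j) ∧ iterAdjMem A l (adjApply (A j) ξ)

lemma keyDeriv {E : Type*} [NormedAddCommGroup E] [NormedSpace ℝ E]
    {HM : Type*} [TopologicalSpace HM] {I : ModelWithCorners ℝ E HM}
    {G : Type*} [TopologicalSpace G] [ChartedSpace HM G] [Group G] [LieGroup I (⊤ : ℕ∞) G]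
    {W : Type*} [NormedAddCommGroup W] [NormedSpace ℝ W]
    (Φ : G → W) (n : ℕ) (hΦ : ContMDiff I (modelWithCornersSelf ℝ W) (n+1) Φ)
    (c : ℝ → G) (hc : ContMDiff (modelWithCornersSelf ℝ ℝ) I (⊤ : ℕ∞) c) :
    ContMDiff I (modelWithCornersSelf ℝ (ℝ →L[ℝ] W)) n
      (fun g => fderiv ℝ (fun t => Φ (g * c t)) 0) := by
  have h1 : ContMDiff (I.prod (modelWithCornersSelf ℝ ℝ)) I (n+1)
      (fun p : G × ℝ => p.1 * c p.2) :=
    (contMDiff_fst.mul (hc.comp contMDiff_snd)).of_le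
      (by exact_mod_cast (le_top : ((n:ℕ∞)+1) ≤ ⊤))
  have h2 : ContMDiff (I.prod (modelWithCornersSelf ℝ ℝ)) (modelWithCornersSelf ℝ W) (n+1)
      (Function.uncurry fun g t => Φ (g * c t)) := hΦ.comp h1
  intro x₀
  have hmn : (n : WithTop ℕ∞) + 1 ≤ (n : WithTop ℕ∞) + 1 := by exact_mod_cast le_refl _
  have h3 := ContMDiffAt.mfderiv (x₀ := x₀) (fun g t => Φ (g * c t)) (fun _ : G => (0:ℝ))
    h2.contMDiffAt contMDiffAt_const hmn
  erw [inTangentCoordinates_model_space] at h3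
  simp_rw [mfderiv_eq_fderiv] at h3
  exact h3

lemma step {Y : Type*} [NormedAddCommGroup Y] [NormedSpace ℂ Y]
    {E : Type*} [NormedAddCommGroup E] [NormedSpace ℝ E]
    {HM : Type*} [TopologicalSpace HM] {I : ModelWithCorners ℝ E HM}
    {G : Type*} [TopologicalSpace G] [ChartedSpace HM G] [Group G] [LieGroup I (⊤ : ℕ∞) G]
    (π : G →* (Y →L[ℂ] Y)ˣ)
    (γj : ℝ → G) (hγ0 : γj 0 = 1) (hγadd : ∀ s t, γj (s + t) = γj s * γj t)
    (hγs : ContMDiff (modelWithCornersSelf ℝ ℝ) I (⊤ : ℕ∞) γj)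
    (Aj : Y →ₗ.[ℂ] Y) (hdense : Dense (Aj.domain : Set Y))
    (hgen : ∀ x : Aj.domain,
      HasDerivAt (fun t => (π (γj t) : Y →L[ℂ] Y) (x : Y)) (Aj x) 0)
    (ξ : StrongDual ℂ Y) (n : ℕ)
    (hΦ : ContMDiff I (modelWithCornersSelf ℝ (StrongDual ℂ Y)) (n+1)
      (fun g => contraDual (π g⁻¹ : Y →L[ℂ] Y) ξ)) :
    ξ ∈ adjDomain Aj ∧ ContMDiff I (modelWithCornersSelf ℝ (StrongDual ℂ Y)) n
      (fun g => contraDual (π g⁻¹ : Y →L[ℂ] Y) (adjApply Aj ξ)) := by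
  set F : G → StrongDual ℂ Y := fun g => contraDual (π g⁻¹ : Y →L[ℂ] Y) ξ with hFdef
  have hFapp : ∀ (g : G) (x : Y), F g x = ξ ((π g⁻¹ : Y →L[ℂ] Y) x) := fun _ _ => rfl
  have hinv : ∀ t, (γj t)⁻¹ = γj (-t) := by
    intro t
    refine inv_eq_of_mul_eq_one_right ?_
    rw [← hγadd, add_neg_cancel, hγ0]
  -- the curves are C^{n+1}
  have hcurve : ∀ g : G, ContDiff ℝ (n+1) (fun t => F (g * γj t)) := by
    intro g
    have : ContMDiff (modelWithCornersSelf ℝ ℝ) I (n+1) (fun t => g * γj t) :=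
      (contMDiff_const.mul hγs).of_le
        (by exact_mod_cast (le_top : ((n:ℕ∞)+1) ≤ ⊤))
    exact contMDiff_iff_contDiff.mp (hΦ.comp this)
  have hd : ∀ g : G, HasDerivAt (fun t => F (g * γj t)) (deriv (fun t => F (g * γj t)) 0) 0 :=
    fun g => (((hcurve g).differentiable (by simp)) 0).hasDerivAt
  have hcurve1 : (fun t => F (1 * γj t)) = fun t => F (γj t) := by
    funext t; rw [one_mul]
  have hD : HasDerivAt (fun t => F (γj t)) (deriv (fun t => F (γj t)) 0) 0 := by
    rw [← hcurve1]; exact hd 1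
  -- evaluation transfer
  have hev : ∀ (c : ℝ → StrongDual ℂ Y) (c' : StrongDual ℂ Y) (x : Y), HasDerivAt c c' 0 →
      HasDerivAt (fun t => c t x) (c' x) 0 := by
    intro c c' x h
    exact (((ContinuousLinearMap.apply ℂ ℂ x).restrictScalars ℝ).hasFDerivAt).comp_hasDerivAt 0 h
  -- pointwise derivative on the domain
  have hder0 : ∀ y : Aj.domain, HasDerivAt (fun t => F (γj t) (y : Y)) (-(ξ (Aj y))) 0 := by
    intro y
    have h1 : HasDerivAt (fun t : ℝ => (π (γj t) : Y →L[ℂ] Y) (y : Y)) (Aj y) 0 := hgen y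
    have hneg : HasDerivAt (fun t : ℝ => -t) (-1 : ℝ) 0 := by
      exact (hasDerivAt_id (0:ℝ)).neg
    have h1' : HasDerivAt (fun t : ℝ => (π (γj t) : Y →L[ℂ] Y) (y : Y)) (Aj y) (-(0:ℝ)) := by
      rwa [neg_zero]
    have h2 := h1'.scomp 0 hneg
    have h2' : HasDerivAt (fun t : ℝ => (π (γj (-t)) : Y →L[ℂ] Y) (y : Y)) (-(Aj y)) 0 := by
      simpa [Function.comp_def] using h2
    have h3 := ((ξ.restrictScalars ℝ).hasFDerivAt).comp_hasDerivAt 0 h2'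
    have hfun : (fun t => F (γj t) (y : Y)) =
        fun t : ℝ => (ξ.restrictScalars ℝ) ((π (γj (-t)) : Y →L[ℂ] Y) (y : Y)) := by
      funext t; rw [hFapp, hinv]; rfl
    rw [hfun]
    simpa [Function.comp_def] using h3
  -- the candidate adjoint value
  set D : StrongDual ℂ Y := -(deriv (fun t => F (γj t)) 0) with hDdef
  have hDspec : ∀ y : Aj.domain, D (y : Y) = ξ (Aj y) := by
    intro y
    have e1 := hev _ _ (y : Y) hD
    have e2 := hder0 y
    have := e1.unique e2
    rw [hDdef, ContinuousLinearMap.neg_apply, this, neg_neg]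
  have hmem : ξ ∈ adjDomain Aj := ⟨D, hDspec⟩
  refine ⟨hmem, ?_⟩
  have hadj : adjApply Aj ξ = D := by
    rw [adjApply, dif_pos hmem]
    refine ContinuousLinearMap.coeFn_injective
      (Continuous.ext_on hdense hmem.choose.continuous D.continuous ?_)
    intro y hy
    have := hmem.choose_spec ⟨y, hy⟩
    rw [this, hDspec ⟨y, hy⟩]
  -- translation identity
  have htrans : (fun g => contraDual (π g⁻¹ : Y →L[ℂ] Y) (adjApply Aj ξ)) =
      fun g => -(deriv (fun t => F (g * γj t)) 0) := by
    funext g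
    rw [hadj]
    refine ContinuousLinearMap.ext fun x => ?_
    have efun : (fun t => F (g * γj t) x) =
        fun t => F (γj t) ((π g⁻¹ : Y →L[ℂ] Y) x) := by
      funext t
      rw [hFapp, hFapp, hinv]
      have : ((g * γj t)⁻¹) = (γj t)⁻¹ * g⁻¹ := mul_inv_rev g (γj t)
      rw [this, hinv, map_mul]
      rfl
    have e1 := hev _ _ x (hd g)
    have e2 := hev _ _ ((π g⁻¹ : Y →L[ℂ] Y) x) hD
    rw [efun] at e1
    have heq := e1.unique e2
    show D ((π g⁻¹ : Y →L[ℂ] Y) x) = -(deriv (fun t => F (g * γj t)) 0) x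
    show (-(deriv (fun t => F (γj t)) 0)) ((π g⁻¹ : Y →L[ℂ] Y) x)
      = (-(deriv (fun t => F (g * γj t)) 0)) x
    rw [ContinuousLinearMap.neg_apply, ContinuousLinearMap.neg_apply, heq]
  rw [htrans]
  have hkey := keyDeriv F n hΦ γj hγs
  have happly : ContMDiff I (modelWithCornersSelf ℝ (StrongDual ℂ Y)) n
      (fun g => (fderiv ℝ (fun t => F (g * γj t)) 0) 1) :=
    hkey.clm_apply contMDiff_const
  have : (fun g => -(deriv (fun t => F (g * γj t)) 0)) =
      fun g => -((fderiv ℝ (fun t => F (g * γj t)) 0) 1) := by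
    funext g; rw [fderiv_apply_one_eq_deriv]
  rw [this]
  exact happly.neg


/-- let `G` be a Lie group and `π` a strongly continuous uniformly bounded
representation of `G` on a Banach space `Y`.  The basis `X₁, …, X_m` of the Lie algebra of
`G` is presented through the smooth one-parameter subgroups `γ j (t) = exp_G (t X_j)`, and
`A j = dπ(X_j)` is the infinitesimal generator of the strongly continuous one-parameter
group `t ↦ π (γ j t)`.  If the orbit map `g ↦ π* (g) ξ` of the contragredient
representation is of class `C^k` (`k ≥ 1`) in the norm topology of `Y*`, then `ξ` belongs
to the domain of `dπ(X_{j₁})* ⋯ dπ(X_{j_k})*` for every choice of indices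
`j₁, …, j_k ∈ {1, …, m}`. -/
theorem stmt15 {Y : Type*} [NormedAddCommGroup Y] [NormedSpace ℂ Y] [CompleteSpace Y]
    {E : Type*} [NormedAddCommGroup E] [NormedSpace ℝ E]
    {HM : Type*} [TopologicalSpace HM] (I : ModelWithCorners ℝ E HM)
    {G : Type*} [TopologicalSpace G] [ChartedSpace HM G] [Group G] [LieGroup I (⊤ : ℕ∞) G]
    (π : G →* (Y →L[ℂ] Y)ˣ)
    (hπc : ∀ x : Y, Continuous fun g => (π g : Y →L[ℂ] Y) x)
    {M : ℝ} (hM : ∀ g : G, ‖(π g : Y →L[ℂ] Y)‖ ≤ M)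
    {m : ℕ} (γ : Fin m → ℝ → G)
    (hγ0 : ∀ j, γ j 0 = 1) (hγadd : ∀ j s t, γ j (s + t) = γ j s * γ j t)
    (hγsmooth : ∀ j, ContMDiff (modelWithCornersSelf ℝ ℝ) I (⊤ : ℕ∞) (γ j))
    (A : Fin m → (Y →ₗ.[ℂ] Y))
    (hdense : ∀ j, Dense ((A j).domain : Set Y))
    (hdom : ∀ (j) (x : Y),
      (∃ y : Y, HasDerivAt (fun t => (π (γ j t) : Y →L[ℂ] Y) x) y 0) ↔ x ∈ (A j).domain)
    (hgen : ∀ (j) (x : (A j).domain),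
      HasDerivAt (fun t => (π (γ j t) : Y →L[ℂ] Y) (x : Y)) (A j x) 0)
    (ξ : StrongDual ℂ Y) (k : ℕ) (hk : 1 ≤ k)
    (hCk : ContMDiff I (modelWithCornersSelf ℝ (StrongDual ℂ Y)) k
      (fun g => contraDual (π g⁻¹ : Y →L[ℂ] Y) ξ)) :
    ∀ l : List (Fin m), l.length = k → iterAdjMem A l ξ := by
  suffices H : ∀ (l : List (Fin m)) (ζ : StrongDual ℂ Y),
      ContMDiff I (modelWithCornersSelf ℝ (StrongDual ℂ Y)) l.length
        (fun g => contraDual (π g⁻¹ : Y →L[ℂ] Y) ζ) → iterAdjMem A l ζ by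
    intro l hl
    exact H l ξ (by rw [hl]; exact hCk)
  intro l
  induction l with
  | nil => intro ζ _; trivial
  | cons j l ih =>
    intro ζ hΦ
    have hcast : (((j :: l).length : ℕ) : WithTop ℕ∞) = (l.length : WithTop ℕ∞) + 1 := by
      simp [List.length_cons]
    rw [hcast] at hΦ
    obtain ⟨h1, h2⟩ := step π (γ j) (hγ0 j) (hγadd j) (hγsmooth j) (A j) (hdense j)
      (hgen j) ζ l.length hΦ
    exact ⟨h1, ih _ h2⟩

end
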